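/- Let (X,d) be a bounded metric space with Samuel compactification (S(X), τ, ∂). Then every sequence in S(X) that converges in the topology τ also converges (to the same limit) with respect to the metric ∂. -/

import Mathlib

open scoped BoundedContinuousFunction
noncomputable section

variable (X : Type*) [MetricSpace X]

/-- The star subalgebra of bounded *uniformly continuous* complex-valued functions
inside the C*-algebra of bounded continuous functions. -/
def UCB : StarSubalgebra ℂ (X →ᵇ ℂ) where
  carrier := {f | UniformContinuous ⇑f}
  mul_mem' := by
    intro a b ha hb
    simp only [Set.mem_setOf_eq] at *
    have hbd : Bornology.IsBounded (Set.range fun x => ((a x : ℂ), (b x : ℂ))) := by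
      refine Bornology.IsBounded.subset ((a.isBounded_range).prod (b.isBounded_range)) ?_
      rintro p ⟨x, rfl⟩
      exact ⟨⟨x, rfl⟩, ⟨x, rfl⟩⟩
    set K := closure (Set.range fun x => ((a x : ℂ), (b x : ℂ))) with hK
    have hKc : IsCompact K := hbd.isCompact_closure
    haveI : CompactSpace K := isCompact_iff_compactSpace.mp hKc
    have hmul : UniformContinuous fun p : K => (p : ℂ × ℂ).1 * (p : ℂ × ℂ).2 :=
      CompactSpace.uniformContinuous_of_continuous
        ((continuous_fst.comp continuous_subtype_val).mul
          (continuous_snd.comp continuous_subtype_val))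
    have hF : UniformContinuous fun x : X => (⟨(a x, b x), subset_closure ⟨x, rfl⟩⟩ : K) :=
      (ha.prodMk hb).subtype_mk _
    have : UniformContinuous fun x : X => a x * b x := hmul.comp hF
    simpa [BoundedContinuousFunction.coe_mul, Pi.mul_def] using this
  one_mem' := by
    simpa [BoundedContinuousFunction.coe_one, Pi.one_def] using (uniformContinuous_const : UniformContinuous fun _ : X => (1 : ℂ))
  add_mem' := by
    intro a b ha hb
    simp only [Set.mem_setOf_eq] at *
    simpa [BoundedContinuousFunction.coe_add, Pi.add_def] using ha.add hb
  zero_mem' := by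
    simpa [BoundedContinuousFunction.coe_zero, Pi.zero_def] using (uniformContinuous_const : UniformContinuous fun _ : X => (0 : ℂ))
  algebraMap_mem' := by
    intro c
    have : ⇑(algebraMap ℂ (X →ᵇ ℂ) c) = fun _ : X => c := by
      ext x; simp [Algebra.algebraMap_eq_smul_one]
    simp only [Set.mem_setOf_eq, this]
    exact uniformContinuous_const
  star_mem' := by
    intro a ha
    simp only [Set.mem_setOf_eq] at *
    have : UniformContinuous fun x : X => (starRingEnd ℂ) (a x) :=
      (Complex.isometry_conj.uniformContinuous).comp ha
    simpa [BoundedContinuousFunction.coe_star, Pi.star_def] using this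

/-- The Samuel compactification of a metric space `X`: the character space (Gelfand spectrum)
of the algebra of bounded uniformly continuous functions, with the weak* topology. -/
def Samuel : Type _ := WeakDual.characterSpace ℂ (UCB X)

instance : TopologicalSpace (Samuel X) := by unfold Samuel; infer_instance

instance : FunLike (Samuel X) (UCB X) ℂ := by unfold Samuel; infer_instance

/-- Evaluation at a point of `X`, as a continuous linear functional on `UCB X`. -/
def samuelEvalCLM (x : X) : WeakDual ℂ (UCB X) :=
  LinearMap.mkContinuous
    { toFun := fun f => (f : X →ᵇ ℂ) x
      map_add' := fun f g => by simp
      map_smul' := fun c f => by simp } 1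
    (fun f => by rw [one_mul]; exact BoundedContinuousFunction.norm_coe_le_norm (f : X →ᵇ ℂ) x)

lemma samuelEvalCLM_apply (x : X) (f : UCB X) : samuelEvalCLM X x f = (f : X →ᵇ ℂ) x := rfl

/-- Evaluation at a point of `X`, as a character of `UCB X`:
this is the canonical embedding of `X` into its Samuel compactification. -/
def samuelEmbed (x : X) : Samuel X :=
  ⟨samuelEvalCLM X x, by
    refine ⟨fun h => ?_, fun f g => ?_⟩
    · have h1 : samuelEvalCLM X x 1 = 0 := by rw [h]; rfl
      have h2 : samuelEvalCLM X x 1 = 1 := rfl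
      rw [h1] at h2
      exact zero_ne_one h2
    · simp only [samuelEvalCLM_apply]
      simp⟩

/-- The bounded `1`-Lipschitz real-valued functions on `X`. -/
def Lip1 : Type _ := {f : X →ᵇ ℝ // LipschitzWith 1 ⇑f}

/-- A bounded `1`-Lipschitz real function, regarded as an element of `UCB X`. -/
def toUCB (f : Lip1 X) : UCB X :=
  ⟨BoundedContinuousFunction.comp Complex.ofReal
      (Complex.isometry_ofReal.lipschitz) f.1,
   by
     have : UniformContinuous fun x : X => (f.1 x : ℂ) :=
       Complex.isometry_ofReal.uniformContinuous.comp f.2.uniformContinuous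
     exact this⟩

/-- The topometric distance `∂` on the Samuel compactification:
`∂(a,b) = sup {|a(f) - b(f)| : f : X → ℝ bounded and 1-Lipschitz}`. -/
def samuelDist (a b : Samuel X) : ℝ :=
  ⨆ f : Lip1 X, ‖a (toUCB X f) - b (toUCB X f)‖

/-- The `∂`-gap between two subsets of the Samuel compactification. -/
def samuelSetDist (A B : Set (Samuel X)) : ℝ :=
  sInf {r | ∃ a ∈ A, ∃ b ∈ B, r = samuelDist X a b}

/-! ### Auxiliary material for the proof -/

section SamuelAux

open Filter Topology BoundedContinuousFunction

/-- A bounded uniformly continuous real function, regarded as an element of `UCB X`. -/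
def toU (f : X →ᵇ ℝ) (hf : UniformContinuous ⇑f) : UCB X :=
  ⟨BoundedContinuousFunction.comp Complex.ofReal
      (Complex.isometry_ofReal.lipschitz) f,
   by
     have : UniformContinuous fun x : X => (f x : ℂ) :=
       Complex.isometry_ofReal.uniformContinuous.comp hf
     exact this⟩

lemma toU_coe (f : X →ᵇ ℝ) (hf : UniformContinuous ⇑f) (x : X) :
    ((toU X f hf : UCB X) : X →ᵇ ℂ) x = (f x : ℂ) := rfl

lemma toUCB_eq (f : Lip1 X) :
    toUCB X f = toU X f.1 f.2.uniformContinuous := rfl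

/-- A `Samuel X` point, as an element of the character space (definally the same). -/
def samuelChar (b : Samuel X) : WeakDual.characterSpace ℂ (UCB X) := b

lemma samuelChar_apply (b : Samuel X) (f : UCB X) : samuelChar X b f = b f := rfl

lemma samuel_continuous_eval (f : UCB X) : Continuous fun b : Samuel X => b f := by
  unfold Samuel
  exact (WeakDual.eval_continuous f).comp continuous_subtype_val

/-- Point evaluations approximate every character on finitely many elements of `UCB X`. -/
lemma samuel_exists_near (b : Samuel X) (F : Finset (UCB X)) {ε : ℝ} (hε : 0 < ε) :
    ∃ x : X, ∀ f ∈ F, ‖(f : X →ᵇ ℂ) x - b f‖ < ε := by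
  by_contra hcon
  push_neg at hcon
  -- hcon : ∀ x, ∃ f ∈ F, ε ≤ ‖f x - b f‖
  classical
  set p : UCB X → UCB X := fun f => f - (b f) • 1 with hp
  set g : UCB X := ∑ f ∈ F, p f * star (p f) with hg
  -- the character kills `g`
  have hbp : ∀ f : UCB X, samuelChar X b (p f) = 0 := by
    intro f
    simp only [hp, map_sub, map_smul, map_one, smul_eq_mul, mul_one, samuelChar_apply, sub_self]
  have hbg : b g = 0 := by
    have : samuelChar X b g = 0 := by
      rw [hg, map_sum]
      refine Finset.sum_eq_zero fun f _ => ?_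
      rw [map_mul, hbp f, zero_mul]
    simpa [samuelChar_apply] using this
  -- pointwise, `g` is a sum of squared moduli
  have hpval : ∀ (f : UCB X) (x : X), ((p f : UCB X) : X →ᵇ ℂ) x = (f : X →ᵇ ℂ) x - b f := by
    intro f x
    simp [hp, Algebra.algebraMap_eq_smul_one]
  have hgval : ∀ x : X, ((g : UCB X) : X →ᵇ ℂ) x =
      ((∑ f ∈ F, Complex.normSq ((f : X →ᵇ ℂ) x - b f) : ℝ) : ℂ) := by
    intro x
    have : ((g : UCB X) : X →ᵇ ℂ) x = ∑ f ∈ F, (((p f : UCB X) : X →ᵇ ℂ) x) *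
        (starRingEnd ℂ) (((p f : UCB X) : X →ᵇ ℂ) x) := by
      rw [hg]
      have e1 : (((∑ f ∈ F, p f * star (p f) : UCB X) : UCB X) : X →ᵇ ℂ)
          = ∑ f ∈ F, ((p f : X →ᵇ ℂ) * star ((p f : UCB X) : X →ᵇ ℂ)) := by
        rw [AddSubmonoidClass.coe_finset_sum]
        exact Finset.sum_congr rfl fun f _ => rfl
      rw [e1, BoundedContinuousFunction.coe_sum, Finset.sum_apply]
      exact Finset.sum_congr rfl fun f _ => by
        simp [BoundedContinuousFunction.coe_mul, BoundedContinuousFunction.coe_star,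
          Complex.star_def]
    rw [this]
    push_cast
    refine Finset.sum_congr rfl fun f _ => ?_
    rw [hpval, Complex.mul_conj]
  set S : X → ℝ := fun x => ∑ f ∈ F, Complex.normSq ((f : X →ᵇ ℂ) x - b f) with hS
  have hSlb : ∀ x, ε ^ 2 ≤ S x := by
    intro x
    obtain ⟨f, hfF, hf⟩ := hcon x
    calc ε ^ 2 ≤ ‖(f : X →ᵇ ℂ) x - b f‖ ^ 2 := by
          have := norm_nonneg ((f : X →ᵇ ℂ) x - b f)
          nlinarith
      _ = Complex.normSq ((f : X →ᵇ ℂ) x - b f) := by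
          rw [Complex.sq_norm]
      _ ≤ S x := by
          simpa [hS] using Finset.single_le_sum
            (f := fun q : UCB X => Complex.normSq ((q : X →ᵇ ℂ) x - b q))
            (fun q _ => Complex.normSq_nonneg _) hfF
  have hglb : ∀ x : X, ε ^ 2 ≤ ‖((g : UCB X) : X →ᵇ ℂ) x‖ := by
    intro x
    rw [hgval x, Complex.norm_real, Real.norm_eq_abs]
    exact (hSlb x).trans (le_abs_self _)
  have hε2 : (0:ℝ) < ε ^ 2 := by positivity
  have hgne : ∀ x : X, ((g : UCB X) : X →ᵇ ℂ) x ≠ 0 := by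
    intro x h
    have := hglb x
    rw [h, norm_zero] at this
    linarith
  -- the pointwise inverse of `g`
  have hcont : Continuous fun x : X => (((g : UCB X) : X →ᵇ ℂ) x)⁻¹ :=
    ((g : UCB X) : X →ᵇ ℂ).continuous.inv₀ hgne
  have hIbnd : ∀ x y : X,
      dist ((((g : UCB X) : X →ᵇ ℂ) x)⁻¹) ((((g : UCB X) : X →ᵇ ℂ) y)⁻¹) ≤ 2 / ε ^ 2 := by
    intro x y
    have hnx : ‖(((g : UCB X) : X →ᵇ ℂ) x)⁻¹‖ ≤ (ε ^ 2)⁻¹ := by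
      rw [norm_inv]
      exact inv_anti₀ hε2 (hglb x)
    have hny : ‖(((g : UCB X) : X →ᵇ ℂ) y)⁻¹‖ ≤ (ε ^ 2)⁻¹ := by
      rw [norm_inv]
      exact inv_anti₀ hε2 (hglb y)
    calc dist _ _ ≤ ‖(((g : UCB X) : X →ᵇ ℂ) x)⁻¹‖ + ‖(((g : UCB X) : X →ᵇ ℂ) y)⁻¹‖ :=
          dist_le_norm_add_norm _ _
      _ ≤ (ε ^ 2)⁻¹ + (ε ^ 2)⁻¹ := add_le_add hnx hny
      _ = 2 / ε ^ 2 := by ring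
  set I : X →ᵇ ℂ := BoundedContinuousFunction.mkOfBound
    ⟨fun x => (((g : UCB X) : X →ᵇ ℂ) x)⁻¹, hcont⟩ (2 / ε ^ 2) hIbnd with hI
  have hIuc : UniformContinuous ⇑I := by
    have hguc : UniformContinuous ⇑((g : UCB X) : X →ᵇ ℂ) := g.2
    rw [Metric.uniformContinuous_iff] at hguc ⊢
    intro δ hδ
    obtain ⟨η, hη, hηs⟩ := hguc (δ * (ε ^ 2 * ε ^ 2)) (by positivity)
    refine ⟨η, hη, fun {x y} hxy => ?_⟩
    have := hηs hxy
    calc dist (I x) (I y)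
        = dist ((((g : UCB X) : X →ᵇ ℂ) x)) ((((g : UCB X) : X →ᵇ ℂ) y)) /
            (‖((g : UCB X) : X →ᵇ ℂ) x‖ * ‖((g : UCB X) : X →ᵇ ℂ) y‖) := by
          exact dist_inv_inv₀ (hgne x) (hgne y)
      _ ≤ dist ((((g : UCB X) : X →ᵇ ℂ) x)) ((((g : UCB X) : X →ᵇ ℂ) y)) / (ε ^ 2 * ε ^ 2) := by
          have hm : ε ^ 2 * ε ^ 2 ≤ ‖((g : UCB X) : X →ᵇ ℂ) x‖ * ‖((g : UCB X) : X →ᵇ ℂ) y‖ :=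
            mul_le_mul (hglb x) (hglb y) (le_of_lt hε2) (norm_nonneg _)
          exact div_le_div_of_nonneg_left dist_nonneg (by positivity) hm
      _ < δ * (ε ^ 2 * ε ^ 2) / (ε ^ 2 * ε ^ 2) := by
          have hpos : (0:ℝ) < ε ^ 2 * ε ^ 2 := by positivity
          exact div_lt_div_of_pos_right this hpos
      _ = δ := by field_simp
  -- `I` inverts `g` inside `UCB X`
  set Iu : UCB X := ⟨I, hIuc⟩ with hIu
  have hmul : g * Iu = 1 := by
    apply Subtype.ext
    apply BoundedContinuousFunction.ext
    intro x
    show ((g : UCB X) : X →ᵇ ℂ) x * I x = 1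
    have : I x = (((g : UCB X) : X →ᵇ ℂ) x)⁻¹ := rfl
    rw [this]
    exact mul_inv_cancel₀ (hgne x)
  have h1 : (1 : ℂ) = 0 := by
    calc (1:ℂ) = samuelChar X b 1 := (map_one _).symm
      _ = samuelChar X b (g * Iu) := by rw [hmul]
      _ = samuelChar X b g * samuelChar X b Iu := map_mul _ _ _
      _ = 0 := by rw [samuelChar_apply, hbg, zero_mul]
  exact one_ne_zero h1

/-- Every character on `UCB X` is the limit of point evaluations along some nontrivial filter. -/
lemma samuel_exists_filter (b : Samuel X) :
    ∃ L : Filter X, L.NeBot ∧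
      ∀ u : UCB X, Filter.Tendsto (fun x => (u : X →ᵇ ℂ) x) L (nhds (b u)) := by
  classical
  set S : Finset (UCB X) × {e : ℝ // 0 < e} → Set X :=
    fun p => {x | ∀ f ∈ p.1, ‖(f : X →ᵇ ℂ) x - b f‖ < p.2.1} with hSdef
  refine ⟨⨅ p, Filter.principal (S p), ?_, ?_⟩
  · haveI : Nonempty (Finset (UCB X) × {e : ℝ // 0 < e}) := ⟨(∅, ⟨1, one_pos⟩)⟩
    apply Filter.iInf_neBot_of_directed'
    · intro p q
      refine ⟨(p.1 ∪ q.1, ⟨min p.2.1 q.2.1, lt_min p.2.2 q.2.2⟩), ?_, ?_⟩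
      · refine Filter.principal_mono.2 fun x hx => fun f hf => ?_
        exact lt_of_lt_of_le (hx f (Finset.mem_union_left _ hf)) (min_le_left _ _)
      · refine Filter.principal_mono.2 fun x hx => fun f hf => ?_
        exact lt_of_lt_of_le (hx f (Finset.mem_union_right _ hf)) (min_le_right _ _)
    · intro p
      rw [Filter.principal_neBot_iff]
      obtain ⟨x, hx⟩ := samuel_exists_near X b p.1 p.2.2
      exact ⟨x, hx⟩
  · intro u
    rw [Metric.tendsto_nhds]
    intro δ hδ
    have hmem : S (({u} : Finset (UCB X)), ⟨δ, hδ⟩) ∈ ⨅ p, Filter.principal (S p) :=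
      Filter.mem_iInf_of_mem _ (Filter.mem_principal_self _)
    filter_upwards [hmem] with x hx
    have := hx u (Finset.mem_singleton_self u)
    rwa [dist_eq_norm]

/-- The real value of a character on (the complexification of) a real function. -/
def evR (b : Samuel X) (f : X →ᵇ ℝ) (hf : UniformContinuous ⇑f) : ℝ :=
  (b (toU X f hf)).re

lemma evR_spec (b : Samuel X) (f : X →ᵇ ℝ) (hf : UniformContinuous ⇑f)
    {L : Filter X} (hne : L.NeBot)
    (hL : ∀ u : UCB X, Filter.Tendsto (fun x => (u : X →ᵇ ℂ) x) L (nhds (b u))) :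
    Filter.Tendsto ⇑f L (nhds (evR X b f hf)) ∧ b (toU X f hf) = ((evR X b f hf : ℝ) : ℂ) := by
  have h := hL (toU X f hf)
  have h' : Filter.Tendsto (fun x => ((f x : ℝ) : ℂ)) L (nhds (b (toU X f hf))) := h
  have him : (b (toU X f hf)).im = 0 := by
    haveI := hne
    have h1 : Filter.Tendsto (fun x => ((f x : ℝ) : ℂ).im) L (nhds ((b (toU X f hf)).im)) :=
      (Complex.continuous_im.tendsto _).comp h'
    have h2 : Filter.Tendsto (fun _ : X => (0 : ℝ)) L (nhds ((b (toU X f hf)).im)) := by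
      simpa [Complex.ofReal_im] using h1
    exact tendsto_nhds_unique h2 tendsto_const_nhds
  constructor
  · have h1 : Filter.Tendsto (fun x => ((f x : ℝ) : ℂ).re) L (nhds ((b (toU X f hf)).re)) :=
      (Complex.continuous_re.tendsto _).comp h'
    simpa [Complex.ofReal_re, evR] using h1
  · exact Complex.ext (by simp [evR]) (by simp [him, Complex.ofReal_im])

lemma evR_real (b : Samuel X) (f : X →ᵇ ℝ) (hf : UniformContinuous ⇑f) :
    b (toU X f hf) = ((evR X b f hf : ℝ) : ℂ) := by
  obtain ⟨L, hne, hL⟩ := samuel_exists_filter X b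
  exact (evR_spec X b f hf hne hL).2

lemma evR_mono (b : Samuel X) {f g : X →ᵇ ℝ} (hf : UniformContinuous ⇑f)
    (hg : UniformContinuous ⇑g) (h : ∀ x, f x ≤ g x) :
    evR X b f hf ≤ evR X b g hg := by
  obtain ⟨L, hne, hL⟩ := samuel_exists_filter X b
  haveI := hne
  exact le_of_tendsto_of_tendsto' (evR_spec X b f hf hne hL).1 (evR_spec X b g hg hne hL).1 h

lemma evR_comp (b : Samuel X) {f g : X →ᵇ ℝ} (hf : UniformContinuous ⇑f)
    (hg : UniformContinuous ⇑g) (θ : ℝ → ℝ) (hθ : Continuous θ)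
    (hfg : ∀ x, g x = θ (f x)) :
    evR X b g hg = θ (evR X b f hf) := by
  obtain ⟨L, hne, hL⟩ := samuel_exists_filter X b
  haveI := hne
  have h1 : Filter.Tendsto ⇑g L (nhds (θ (evR X b f hf))) := by
    rw [show ⇑g = θ ∘ ⇑f from funext hfg]
    exact (hθ.tendsto _).comp (evR_spec X b f hf hne hL).1
  exact tendsto_nhds_unique (evR_spec X b g hg hne hL).1 h1

lemma evR_max2 (b : Samuel X) {f g h : X →ᵇ ℝ} (hf : UniformContinuous ⇑f)
    (hg : UniformContinuous ⇑g) (hh : UniformContinuous ⇑h)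
    (hmax : ∀ x, h x = max (f x) (g x)) :
    evR X b h hh = max (evR X b f hf) (evR X b g hg) := by
  obtain ⟨L, hne, hL⟩ := samuel_exists_filter X b
  haveI := hne
  have h1 : Filter.Tendsto ⇑h L (nhds (max (evR X b f hf) (evR X b g hg))) := by
    have := ((evR_spec X b f hf hne hL).1.max (evR_spec X b g hg hne hL).1)
    simpa [← hmax] using this
  exact tendsto_nhds_unique (evR_spec X b h hh hne hL).1 h1

lemma evR_sub (b : Samuel X) {f g h : X →ᵇ ℝ} (hf : UniformContinuous ⇑f)
    (hg : UniformContinuous ⇑g) (hh : UniformContinuous ⇑h)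
    (hsub : ∀ x, h x = f x - g x) :
    evR X b h hh = evR X b f hf - evR X b g hg := by
  obtain ⟨L, hne, hL⟩ := samuel_exists_filter X b
  haveI := hne
  have h1 : Filter.Tendsto ⇑h L (nhds (evR X b f hf - evR X b g hg)) := by
    have := ((evR_spec X b f hf hne hL).1.sub (evR_spec X b g hg hne hL).1)
    simpa [← hsub] using this
  exact tendsto_nhds_unique (evR_spec X b h hh hne hL).1 h1

lemma evR_zero (b : Samuel X) (h0 : UniformContinuous ⇑(0 : X →ᵇ ℝ)) :
    evR X b 0 h0 = 0 := by
  have : toU X 0 h0 = 0 := by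
    apply Subtype.ext
    apply BoundedContinuousFunction.ext
    intro x
    show ((0 : X →ᵇ ℝ) x : ℂ) = (0 : X →ᵇ ℂ) x
    simp
  rw [evR, this]
  have : samuelChar X b 0 = 0 := map_zero _
  rw [← samuelChar_apply, this]
  simp

lemma evR_mul_eq_zero (b : Samuel X) {f g : X →ᵇ ℝ} (hf : UniformContinuous ⇑f)
    (hg : UniformContinuous ⇑g) (h : ∀ x, f x * g x = 0) :
    b (toU X f hf) * b (toU X g hg) = 0 := by
  have hprod : toU X f hf * toU X g hg = 0 := by
    apply Subtype.ext
    apply BoundedContinuousFunction.ext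
    intro x
    show ((f x : ℝ) : ℂ) * ((g x : ℝ) : ℂ) = (0 : X →ᵇ ℂ) x
    have := h x
    push_cast
    simp only [BoundedContinuousFunction.coe_zero, Pi.zero_apply]
    exact_mod_cast congrArg (fun r : ℝ => (r : ℂ)) this
  calc b (toU X f hf) * b (toU X g hg)
      = samuelChar X b (toU X f hf * toU X g hg) := (map_mul (samuelChar X b) _ _).symm
    _ = 0 := by rw [hprod]; exact map_zero _

instance : Inhabited (Lip1 X) :=
  ⟨⟨0, by
      rw [BoundedContinuousFunction.coe_zero]
      exact (LipschitzWith.const (0 : ℝ)).weaken zero_le_one⟩⟩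

/-- Negation on `Lip1`. -/
def lipNeg (f : Lip1 X) : Lip1 X :=
  ⟨-f.1, by
    rw [BoundedContinuousFunction.coe_neg]
    exact f.2.neg⟩

lemma toUCB_lipNeg (f : Lip1 X) : toUCB X (lipNeg X f) = - toUCB X f := by
  apply Subtype.ext
  apply BoundedContinuousFunction.ext
  intro x
  show (((-f.1 : X →ᵇ ℝ) x : ℝ) : ℂ) = -((f.1 x : ℝ) : ℂ)
  push_cast
  simp

/-- The clamp function `s ↦ min (max (s - t) 0) c`. -/
def cut (t c : ℝ) : ℝ → ℝ := fun s => min (max (s - t) 0) c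

lemma cut_lip (t c : ℝ) : LipschitzWith 1 (cut t c) := by
  have h1 : LipschitzWith 1 (fun s : ℝ => s - t) :=
    LipschitzWith.of_dist_le_mul fun x y => by
      simp [Real.dist_eq]
  exact (h1.max_const 0).min_const c

lemma cut_continuous (t c : ℝ) : Continuous (cut t c) := (cut_lip t c).continuous

/-- Clamped cut-off of a bounded continuous real function. -/
def cutB (f : X →ᵇ ℝ) (t c : ℝ) : X →ᵇ ℝ :=
  BoundedContinuousFunction.comp (cut t c) (cut_lip t c) f

lemma cutB_apply (f : X →ᵇ ℝ) (t c : ℝ) (x : X) :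
    cutB X f t c x = min (max (f x - t) 0) c := rfl

lemma cutB_uc {f : X →ᵇ ℝ} (hf : UniformContinuous ⇑f) (t c : ℝ) :
    UniformContinuous ⇑(cutB X f t c) :=
  ((cut_lip t c).uniformContinuous).comp hf

lemma cutB_lip {f : X →ᵇ ℝ} (hf : LipschitzWith 1 ⇑f) (t c : ℝ) :
    LipschitzWith 1 ⇑(cutB X f t c) := by
  have h := (cut_lip t c).comp hf
  rw [mul_one] at h
  exact h

lemma evR_cutB (b : Samuel X) {f : X →ᵇ ℝ} (hf : UniformContinuous ⇑f) (t c : ℝ) :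
    evR X b (cutB X f t c) (cutB_uc X hf t c) = min (max (evR X b f hf - t) 0) c :=
  evR_comp X b hf (cutB_uc X hf t c) (cut t c) (cut_continuous t c) (fun _ => rfl)

lemma uc_max {f g : X → ℝ} (hf : UniformContinuous f) (hg : UniformContinuous g) :
    UniformContinuous fun x => max (f x) (g x) :=
  (lipschitzWith_max.uniformContinuous).comp (hf.prodMk hg)

end SamuelAux

/-- **Topologically convergent sequences in the Samuel compactification are `∂`-convergent.**
If `(X,d)` is a bounded metric space and `(a n)` converges to `ℓ` in the (weak*) topology of
the Samuel compactification `S(X)`, then `(a n)` converges to `ℓ` with respect to the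
topometric distance `∂`. -/
theorem samuel_tendsto_dist_of_tendsto (hbdd : Bornology.IsBounded (Set.univ : Set X))
    (a : ℕ → Samuel X) (ℓ : Samuel X)
    (hconv : Filter.Tendsto a Filter.atTop (nhds ℓ)) :
    ∀ ε > 0, ∀ᶠ n in Filter.atTop, samuelDist X (a n) ℓ < ε := by
  classical
  intro ε hε
  by_contra hcon
  rw [Filter.not_eventually] at hcon
  have hc : (0:ℝ) < ε/8 := by linarith
  set c : ℝ := ε/8 with hcdef
  have uc0 : UniformContinuous ⇑(0 : X →ᵇ ℝ) := by
    rw [BoundedContinuousFunction.coe_zero]; exact uniformContinuous_const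
  -- negation flips `evR`
  have hneg : ∀ (b : Samuel X) (f : Lip1 X),
      evR X b (lipNeg X f).1 (lipNeg X f).2.uniformContinuous
        = - evR X b f.1 f.2.uniformContinuous := by
    intro b f
    have h := evR_sub X b uc0 f.2.uniformContinuous (lipNeg X f).2.uniformContinuous
      (fun x => by
        show (-f.1 : X →ᵇ ℝ) x = (0 : X →ᵇ ℝ) x - f.1 x
        simp)
    rw [h, evR_zero]
    ring
  -- the frequent witnesses
  set P : ℕ → Prop := fun n => ∃ f : Lip1 X,
    evR X ℓ f.1 f.2.uniformContinuous + ε/2 < evR X (a n) f.1 f.2.uniformContinuous with hPdef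
  have hfreq : ∃ᶠ n in Filter.atTop, P n := by
    refine hcon.mono fun n hn => ?_
    by_contra hPn
    simp only [hPdef] at hPn
    push_neg at hPn
    apply hn
    have hb : samuelDist X (a n) ℓ ≤ ε/2 := by
      rw [samuelDist]
      apply ciSup_le
      intro f
      rw [toUCB_eq, evR_real X (a n) f.1 f.2.uniformContinuous,
        evR_real X ℓ f.1 f.2.uniformContinuous, ← Complex.ofReal_sub,
        Complex.norm_real, Real.norm_eq_abs, abs_le]
      have h1 := hPn f
      have h2 := hPn (lipNeg X f)
      rw [hneg (a n) f, hneg ℓ f] at h2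
      constructor <;> linarith
    linarith
  -- choose witnesses
  have hch : ∀ n, ∃ f : Lip1 X, P n →
      evR X ℓ f.1 f.2.uniformContinuous + ε/2 < evR X (a n) f.1 f.2.uniformContinuous := by
    intro n
    by_cases h : P n
    · obtain ⟨f, hf⟩ := h
      exact ⟨f, fun _ => hf⟩
    · exact ⟨default, fun hn => absurd hn h⟩
  choose fΦ hfΦ using hch
  set φ : ℕ → X →ᵇ ℝ := fun n => (fΦ n).1 with hφdef
  have hφuc : ∀ n, UniformContinuous ⇑(φ n) := fun n => (fΦ n).2.uniformContinuous
  have hφlip : ∀ n, LipschitzWith 1 ⇑(φ n) := fun n => (fΦ n).2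
  set t : ℕ → ℝ := fun n => evR X ℓ (φ n) (hφuc n) with htdef
  set ζ : ℕ → X →ᵇ ℝ := fun n => cutB X (φ n) (t n + c) c with hζdef
  set χ : ℕ → X →ᵇ ℝ := fun n => cutB X (φ n) (t n + 2*c) c with hχdef
  have hζuc : ∀ n, UniformContinuous ⇑(ζ n) := fun n => cutB_uc X (hφuc n) _ _
  have hχuc : ∀ n, UniformContinuous ⇑(χ n) := fun n => cutB_uc X (hφuc n) _ _
  have hζlip : ∀ n, LipschitzWith 1 ⇑(ζ n) := fun n => cutB_lip X (hφlip n) _ _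
  have hχlip : ∀ n, LipschitzWith 1 ⇑(χ n) := fun n => cutB_lip X (hφlip n) _ _
  -- evaluation convergence
  have hev : ∀ u : UCB X,
      Filter.Tendsto (fun n => (a n) u) Filter.atTop (nhds (ℓ u)) := fun u =>
    ((samuel_continuous_eval X u).tendsto ℓ).comp hconv
  have hevR : ∀ (f : X →ᵇ ℝ) (hf : UniformContinuous ⇑f),
      Filter.Tendsto (fun n => evR X (a n) f hf) Filter.atTop (nhds (evR X ℓ f hf)) := by
    intro f hf
    exact (Complex.continuous_re.tendsto _).comp (hev (toU X f hf))
  have hζ0 : ∀ n, evR X ℓ (ζ n) (hζuc n) = 0 := by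
    intro n
    have h := evR_cutB X ℓ (hφuc n) (t n + c) c
    have ht : evR X ℓ (φ n) (hφuc n) = t n := rfl
    rw [show evR X ℓ (ζ n) (hζuc n) = evR X ℓ (cutB X (φ n) (t n + c) c)
        (cutB_uc X (hφuc n) _ _) from rfl, h, ht]
    rw [show t n - (t n + c) = -c by ring]
    rw [max_eq_right (by linarith : -c ≤ (0:ℝ)), min_eq_left hc.le]
  -- extract the subsequence
  have hseq : ∃ r : ℕ → ℕ, (∀ n, P (r n)) ∧ ∀ m n, m < n →
      (r m < r n ∧ evR X (a (r n)) (ζ (r m)) (hζuc (r m)) < c/2) := by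
    apply exists_seq_of_forall_finset_exists P
      (fun x y => x < y ∧ evR X (a y) (ζ x) (hζuc x) < c/2)
    intro s hs
    have hev2 : ∀ᶠ n in Filter.atTop, ∀ x ∈ s,
        (x < n ∧ evR X (a n) (ζ x) (hζuc x) < c/2) := by
      rw [Filter.eventually_all_finset]
      intro x hx
      have h1 : ∀ᶠ n in Filter.atTop, x < n := Filter.eventually_gt_atTop x
      have h2 : ∀ᶠ n in Filter.atTop, evR X (a n) (ζ x) (hζuc x) < c/2 := by
        have h3 := hevR (ζ x) (hζuc x)
        rw [hζ0 x] at h3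
        exact h3.eventually_lt_const (by linarith)
      exact h1.and h2
    obtain ⟨n, hPn, hn⟩ := (hfreq.and_eventually hev2).exists
    exact ⟨n, hPn, fun x hx => hn x hx⟩
  obtain ⟨r, hrP, hrR⟩ := hseq
  have hrmono : StrictMono r := fun i j h => (hrR i j h).1
  have hclose : ∀ j k, j < k → evR X (a (r k)) (ζ (r j)) (hζuc (r j)) < c/2 :=
    fun j k h => (hrR j k h).2
  -- the running maxima
  set M : ℕ → X →ᵇ ℝ :=
    fun k => Nat.rec (0 : X →ᵇ ℝ) (fun j Mj => Mj ⊔ ζ (r j)) k with hMdef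
  have hMsucc : ∀ k, M (k+1) = M k ⊔ ζ (r k) := fun k => rfl
  have hMsup : ∀ k x, M (k+1) x = max (M k x) (ζ (r k) x) := fun k x => rfl
  have hM0 : ∀ x : X, M 0 x = 0 := fun x => rfl
  have hMuc : ∀ k, UniformContinuous ⇑(M k) := by
    intro k
    induction k with
    | zero => exact uc0
    | succ k ih =>
        have h : ⇑(M (k+1)) = fun x => max (M k x) (ζ (r k) x) := rfl
        rw [h]
        exact uc_max X ih (hζuc (r k))
  have hMlip : ∀ k, LipschitzWith 1 ⇑(M k) := by
    intro k
    induction k with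
    | zero =>
        have h : ⇑(M 0) = fun _ : X => (0:ℝ) := rfl
        rw [h]
        exact (LipschitzWith.const (0:ℝ)).weaken zero_le_one
    | succ k ih =>
        have h : ⇑(M (k+1)) = fun x => max (M k x) (ζ (r k) x) := rfl
        rw [h]
        simpa using ih.max (hζlip (r k))
  have hζmem : ∀ n x, 0 ≤ ζ n x ∧ ζ n x ≤ c := by
    intro n x
    rw [show ζ n x = min (max (φ n x - (t n + c)) 0) c from rfl]
    exact ⟨le_min (le_max_right _ _) hc.le, min_le_right _ _⟩
  have hχmem : ∀ n x, 0 ≤ χ n x ∧ χ n x ≤ c := by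
    intro n x
    rw [show χ n x = min (max (φ n x - (t n + 2*c)) 0) c from rfl]
    exact ⟨le_min (le_max_right _ _) hc.le, min_le_right _ _⟩
  have hMnonneg : ∀ k x, 0 ≤ M k x := by
    intro k
    induction k with
    | zero => intro x; rw [hM0]
    | succ k ih => intro x; rw [hMsup]; exact le_max_of_le_left (ih x)
  have hMge : ∀ j k x, j < k → ζ (r j) x ≤ M k x := by
    intro j k
    induction k with
    | zero => intro x h; omega
    | succ k ih =>
        intro x h
        rcases Nat.lt_succ_iff_lt_or_eq.mp h with h' | h'
        · rw [hMsup]; exact le_max_of_le_left (ih x h')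
        · subst h'; rw [hMsup]; exact le_max_of_le_right le_rfl
  -- the disjointly supported bumps
  set Ch : ℕ → X →ᵇ ℝ := fun k => (χ (r k) - M k) ⊔ 0 with hChdef
  have hChapp : ∀ k x, Ch k x = max (χ (r k) x - M k x) 0 := fun k x => rfl
  have hChuc : ∀ k, UniformContinuous ⇑(Ch k) := by
    intro k
    have h : ⇑(Ch k) = fun x => max ((χ (r k)) x - M k x) 0 := rfl
    rw [h]
    exact uc_max X ((hχuc (r k)).sub (hMuc k)) uniformContinuous_const
  have hChlip : ∀ k, LipschitzWith 2 ⇑(Ch k) := by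
    intro k
    have h : ⇑(Ch k) = fun x => max ((χ (r k)) x - M k x) 0 := rfl
    rw [h]
    have hsub : LipschitzWith 2 (fun x => χ (r k) x - M k x) := by
      have := (hχlip (r k)).sub (hMlip k)
      norm_num at this
      exact this
    exact hsub.max_const 0
  have hChnonneg : ∀ k x, 0 ≤ Ch k x := by
    intro k x; rw [hChapp]; exact le_max_right _ _
  have hChle : ∀ k x, Ch k x ≤ c := by
    intro k x
    rw [hChapp]
    refine max_le ?_ hc.le
    have h1 := (hχmem (r k) x).2
    have h2 := hMnonneg k x
    linarith
  -- the key value bounds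
  have hMval : ∀ k, evR X (a (r k)) (M k) (hMuc k) < c/2 := by
    intro k
    have hall : ∀ j, j ≤ k → evR X (a (r k)) (M j) (hMuc j) < c/2 := by
      intro j
      induction j with
      | zero =>
          intro _
          have h0 : evR X (a (r k)) (M 0) (hMuc 0) = 0 := evR_zero X (a (r k)) (hMuc 0)
          rw [h0]; linarith
      | succ j ih =>
          intro hj
          have e : evR X (a (r k)) (M (j+1)) (hMuc (j+1))
              = max (evR X (a (r k)) (M j) (hMuc j))
                  (evR X (a (r k)) (ζ (r j)) (hζuc (r j))) :=
            evR_max2 X (a (r k)) (hMuc j) (hζuc (r j)) (hMuc (j+1)) (fun x => rfl)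
          rw [e]
          exact max_lt (ih (by omega)) (hclose j k (by omega))
    exact hall k le_rfl
  have hChval : ∀ k, c/2 ≤ evR X (a (r k)) (Ch k) (hChuc k) := by
    intro k
    have hφval : t (r k) + ε/2 < evR X (a (r k)) (φ (r k)) (hφuc (r k)) := hfΦ (r k) (hrP k)
    have hχval : evR X (a (r k)) (χ (r k)) (hχuc (r k)) = c := by
      have h := evR_cutB X (a (r k)) (hφuc (r k)) (t (r k) + 2*c) c
      rw [show evR X (a (r k)) (χ (r k)) (hχuc (r k))
          = evR X (a (r k)) (cutB X (φ (r k)) (t (r k) + 2*c) c)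
            (cutB_uc X (hφuc (r k)) _ _) from rfl, h]
      have h4c : ε/2 = 4*c := by rw [hcdef]; ring
      refine min_eq_right (le_max_of_le_left ?_)
      linarith
    have hsubuc : UniformContinuous ⇑(χ (r k) - M k) := (hχuc (r k)).sub (hMuc k)
    have e1 : evR X (a (r k)) (Ch k) (hChuc k)
        = max (evR X (a (r k)) (χ (r k) - M k) hsubuc) (evR X (a (r k)) 0 uc0) :=
      evR_max2 X (a (r k)) hsubuc uc0 (hChuc k) (fun x => rfl)
    have e2 : evR X (a (r k)) (χ (r k) - M k) hsubuc
        = evR X (a (r k)) (χ (r k)) (hχuc (r k)) - evR X (a (r k)) (M k) (hMuc k) :=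
      evR_sub X (a (r k)) (hχuc (r k)) (hMuc k) hsubuc (fun x => rfl)
    rw [e1, e2, hχval, evR_zero]
    have := hMval k
    refine le_max_of_le_left ?_
    linarith
  -- disjointness of supports
  have hdisj : ∀ j k x, j < k → 0 < Ch j x → Ch k x = 0 := by
    intro j k x hjk h
    have h1 : 0 < χ (r j) x - M j x := by
      by_contra h'
      push_neg at h'
      rw [hChapp, max_eq_right h'] at h
      exact lt_irrefl 0 h
    have h2 : 0 < χ (r j) x := by
      have := hMnonneg j x
      linarith
    have h3 : t (r j) + 2*c < φ (r j) x := by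
      rw [show χ (r j) x = min (max (φ (r j) x - (t (r j) + 2*c)) 0) c from rfl] at h2
      have h4 := (lt_min_iff.mp h2).1
      rcases lt_max_iff.mp h4 with h5 | h5
      · linarith
      · exact absurd h5 (lt_irrefl 0)
    have h4 : ζ (r j) x = c := by
      rw [show ζ (r j) x = min (max (φ (r j) x - (t (r j) + c)) 0) c from rfl]
      refine min_eq_right (le_max_of_le_left ?_)
      linarith
    have h5 : c ≤ M k x := h4 ▸ hMge j k x hjk
    have h6 : χ (r k) x ≤ c := (hχmem (r k) x).2
    rw [hChapp]
    exact max_eq_right (by linarith)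
  -- the limiting function `G`
  set Gf : X → ℝ := fun x => ⨆ i, Ch (2*i) x with hGfdef
  have hbddG : ∀ x, BddAbove (Set.range fun i => Ch (2*i) x) := by
    intro x
    refine ⟨c, ?_⟩
    rintro _ ⟨i, rfl⟩
    exact hChle (2*i) x
  have hGfle : ∀ x, Gf x ≤ c := fun x => ciSup_le fun i => hChle (2*i) x
  have hGfnonneg : ∀ x, 0 ≤ Gf x :=
    fun x => le_trans (hChnonneg 0 x) (le_ciSup (hbddG x) 0)
  have hChleG : ∀ i x, Ch (2*i) x ≤ Gf x := fun i x => le_ciSup (hbddG x) i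
  have hGkey : ∀ x y : X, Gf x ≤ Gf y + 2 * dist x y := by
    intro x y
    apply ciSup_le
    intro i
    have h1 : Ch (2*i) x ≤ Ch (2*i) y + 2 * dist x y := by
      have h2 := (hChlip (2*i)).dist_le_mul x y
      rw [Real.dist_eq] at h2
      push_cast at h2
      have := abs_le.mp h2
      linarith [this.2]
    exact h1.trans (by linarith [hChleG i y])
  have hGlip : LipschitzWith 2 Gf := by
    apply LipschitzWith.of_dist_le_mul
    intro x y
    rw [Real.dist_eq, abs_le]
    push_cast
    constructor
    · linarith [hGkey y x, dist_comm y x]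
    · linarith [hGkey x y]
  set G : X →ᵇ ℝ := BoundedContinuousFunction.mkOfBound ⟨Gf, hGlip.continuous⟩ c
    (fun x y => by
      show dist (Gf x) (Gf y) ≤ c
      rw [Real.dist_eq, abs_le]
      constructor
      · linarith [hGfnonneg x, hGfle y]
      · linarith [hGfle x, hGfnonneg y]) with hGdef
  have hGcoe : ⇑G = Gf := rfl
  have hGuc : UniformContinuous ⇑G := by rw [hGcoe]; exact hGlip.uniformContinuous
  -- convergence of the evaluations of `G`
  have hGtend : Filter.Tendsto (fun n => evR X (a n) G hGuc) Filter.atTop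
      (nhds (evR X ℓ G hGuc)) := hevR G hGuc
  -- even-indexed lower bound
  have hevenmono : StrictMono fun k : ℕ => 2*k := by
    intro x y h
    show 2*x < 2*y
    omega
  have hoddmono : StrictMono fun k : ℕ => 2*k+1 := by
    intro x y h
    show 2*x+1 < 2*y+1
    omega
  have heven : c/2 ≤ evR X ℓ G hGuc := by
    have ht2 : Filter.Tendsto (fun k => evR X (a (r (2*k))) G hGuc) Filter.atTop
        (nhds (evR X ℓ G hGuc)) := hGtend.comp ((hrmono.comp hevenmono).tendsto_atTop)
    refine ge_of_tendsto' ht2 fun k => ?_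
    refine le_trans (hChval (2*k)) ?_
    refine evR_mono X (a (r (2*k))) (hChuc (2*k)) hGuc fun x => ?_
    rw [hGcoe]
    exact hChleG k x
  -- odd-indexed evaluations vanish
  have hzero : ∀ k, evR X (a (r (2*k+1))) G hGuc = 0 := by
    intro k
    have hprod : ∀ x, G x * Ch (2*k+1) x = 0 := by
      intro x
      rcases eq_or_lt_of_le (hGfnonneg x) with h | h
      · have hx : G x = 0 := by rw [hGcoe, ← h]
        rw [hx, zero_mul]
      · have hex : ∃ i, 0 < Ch (2*i) x := by
          by_contra hno
          push_neg at hno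
          have hle : Gf x ≤ 0 := ciSup_le fun i => hno i
          linarith
        obtain ⟨i, hi⟩ := hex
        have hzz : Ch (2*k+1) x = 0 := by
          rcases lt_or_gt_of_ne (show 2*i ≠ 2*k+1 by omega) with hlt | hgt
          · exact hdisj (2*i) (2*k+1) x hlt hi
          · by_contra hne
            have h2 : 0 < Ch (2*k+1) x := lt_of_le_of_ne (hChnonneg _ x) (Ne.symm hne)
            have h3 := hdisj (2*k+1) (2*i) x hgt h2
            rw [h3] at hi
            exact lt_irrefl 0 hi
        rw [hzz, mul_zero]
    have hmz := evR_mul_eq_zero X (a (r (2*k+1))) hGuc (hChuc (2*k+1)) hprod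
    have hCh2 : c/2 ≤ evR X (a (r (2*k+1))) (Ch (2*k+1)) (hChuc (2*k+1)) := hChval (2*k+1)
    have hne2 : (a (r (2*k+1))) (toU X (Ch (2*k+1)) (hChuc (2*k+1))) ≠ 0 := by
      rw [evR_real]
      intro h0
      have h1 := Complex.ofReal_eq_zero.mp h0
      linarith
    have hG0 : (a (r (2*k+1))) (toU X G hGuc) = 0 := by
      rcases mul_eq_zero.mp hmz with h | h
      · exact h
      · exact absurd h hne2
    show (((a (r (2*k+1))) (toU X G hGuc)).re) = 0
    rw [hG0]
    simp
  have hodd : evR X ℓ G hGuc = 0 := by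
    have ht3 : Filter.Tendsto (fun k => evR X (a (r (2*k+1))) G hGuc) Filter.atTop
        (nhds (evR X ℓ G hGuc)) := hGtend.comp ((hrmono.comp hoddmono).tendsto_atTop)
    have heq : (fun k => evR X (a (r (2*k+1))) G hGuc) = fun _ => (0:ℝ) := funext hzero
    rw [heq] at ht3
    exact tendsto_nhds_unique ht3 tendsto_const_nhds
  rw [hodd] at heven
  linarith
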